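/- For every positive integer n, K(n) ≡ (-1)^{n-1}·⌊(n-1)!/e⌋ + δ (mod n), where δ = 0 if n-1 is odd and δ = 1 if n-1 is even (with the convention that for n = 1 the right side is ⌊1/e⌋ + 1 = 1). -/

import Mathlib

open Finset Filter

/-- Kurepa's left factorial. -/
def K (n : ℕ) : ℕ := ∑ k ∈ Finset.range n, k.factorial

private lemma factAntitone : Antitone (fun i : ℕ => (1 : ℝ) / (i.factorial : ℝ)) := by
  intro a b hab
  have h1 : (0:ℝ) < a.factorial := by positivity
  have h2 : (a.factorial : ℝ) ≤ b.factorial := by exact_mod_cast Nat.factorial_le hab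
  exact one_div_le_one_div_of_le h1 h2

private lemma exp_tendsto :
    Tendsto (fun N : ℕ => ∑ i ∈ range N, (-1 : ℝ) ^ i * (1 / (i.factorial : ℝ)))
      atTop (nhds (Real.exp (-1))) := by
  have h := NormedSpace.exp_series_hasSum_exp' (𝕂 := ℝ) (-1 : ℝ)
  rw [← Real.exp_eq_exp_ℝ] at h
  have h2 : (fun n : ℕ => ((n.factorial : ℝ))⁻¹ • (-1 : ℝ) ^ n)
      = fun n : ℕ => (-1 : ℝ) ^ n * (1 / (n.factorial : ℝ)) := by
    funext n
    rw [smul_eq_mul, one_div, mul_comm]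
  rw [h2] at h
  exact h.tendsto_sum_nat

private lemma exp_ub (k : ℕ) :
    Real.exp (-1) ≤ ∑ i ∈ range (2*k+1), (-1 : ℝ) ^ i * (1 / (i.factorial : ℝ)) :=
  Antitone.tendsto_le_alternating_series exp_tendsto factAntitone k

private lemma exp_lb (k : ℕ) :
    ∑ i ∈ range (2*k), (-1 : ℝ) ^ i * (1 / (i.factorial : ℝ)) ≤ Real.exp (-1) :=
  Antitone.alternating_series_le_tendsto exp_tendsto factAntitone k

private lemma desc_zmod (m : ℕ) : ∀ j ≤ m,
    ((m.descFactorial j : ℕ) : ZMod (m+1)) = (-1)^j * (j.factorial : ZMod (m+1)) := by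
  intro j
  induction j with
  | zero => simp
  | succ j ih =>
    intro hj
    have hj' : j ≤ m := by omega
    have hm : (m : ZMod (m+1)) = -1 := by
      have h := ZMod.natCast_self (m+1)
      push_cast at h
      linear_combination h
    rw [Nat.descFactorial_succ, Nat.cast_mul, ih hj', Nat.cast_sub hj', hm,
      Nat.factorial_succ]
    push_cast
    ring

theorem kurepa_floor_congr (n : ℕ) (hn : 0 < n) :
    (K n : ℤ) ≡ (-1) ^ (n - 1) * ⌊((n - 1).factorial : ℝ) / Real.exp 1⌋ +
      (if Even (n - 1) then 1 else 0) [ZMOD n] := by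
  obtain ⟨m, rfl⟩ := Nat.exists_eq_succ_of_ne_zero hn.ne'
  simp only [Nat.succ_sub_one, Nat.add_sub_cancel]
  set D : ℤ := ∑ k ∈ range (m+1), (-1)^k * (m.descFactorial (m-k) : ℤ) with hDdef
  set F : ℝ := (m.factorial : ℝ) with hFdef
  have hF0 : (0:ℝ) < F := by rw [hFdef]; positivity
  set P : ℕ → ℝ := fun N => ∑ i ∈ range N, (-1 : ℝ) ^ i * (1 / (i.factorial : ℝ)) with hPdef
  -- F * P (m+1) = D
  have hdesc : ∀ k ≤ m, (m.descFactorial (m-k) : ℝ) * (k.factorial : ℝ) = F := by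
    intro k hk
    have h := Nat.factorial_mul_descFactorial (Nat.sub_le m k)
    rw [show m - (m - k) = k by omega] at h
    rw [hFdef]
    exact_mod_cast (mul_comm _ _).trans h
  have hP1 : F * P (m+1) = (D : ℝ) := by
    rw [hPdef, Finset.mul_sum, hDdef]
    push_cast
    refine Finset.sum_congr rfl fun k hk => ?_
    have hk' : k ≤ m := Nat.lt_succ_iff.mp (Finset.mem_range.mp hk)
    have h := hdesc k hk'
    have hkf : (k.factorial : ℝ) ≠ 0 := by positivity
    rw [← h]
    field_simp
  have hP2 : P (m+2) = P (m+1) + (-1)^(m+1) * (1 / ((m+1).factorial : ℝ)) := by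
    rw [hPdef]
    exact Finset.sum_range_succ _ (m+1)
  have hP3 : P (m+3) = P (m+2) + (-1)^(m+2) * (1 / ((m+2).factorial : ℝ)) := by
    rw [hPdef]
    exact Finset.sum_range_succ _ (m+2)
  have hfact1 : ((m+1).factorial : ℝ) = (m+1) * F := by
    rw [hFdef, Nat.factorial_succ]; push_cast; ring
  have hfact2 : ((m+2).factorial : ℝ) = (m+2) * ((m+1) * F) := by
    rw [show m+2 = (m+1)+1 by ring, Nat.factorial_succ]
    push_cast
    rw [hfact1]
    push_cast
    ring
  have hm1 : (0:ℝ) < (m:ℝ) + 1 := by positivity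
  have hm2 : (0:ℝ) < (m:ℝ) + 2 := by positivity
  have hFa : F * (1 / ((m+1).factorial : ℝ)) = 1 / ((m:ℝ)+1) := by
    rw [hfact1]; field_simp
  have hFb : F * (1 / ((m+2).factorial : ℝ)) = 1 / (((m:ℝ)+1) * ((m:ℝ)+2)) := by
    rw [hfact2]; field_simp
  have hexp : F / Real.exp 1 = F * Real.exp (-1) := by
    rw [Real.exp_neg, div_eq_mul_inv]
  -- the reflected sum identity
  have hTD : (∑ j ∈ range (m+1), (-1:ℤ)^j * (m.descFactorial j : ℤ)) = (-1)^m * D := by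
    rw [← Finset.sum_range_reflect (fun j => (-1:ℤ)^j * (m.descFactorial j : ℤ)) (m+1),
      hDdef, Finset.mul_sum]
    refine Finset.sum_congr rfl fun j hj => ?_
    have hj' : j ≤ m := Nat.lt_succ_iff.mp (Finset.mem_range.mp hj)
    have h1 : m + 1 - 1 - j = m - j := by omega
    rw [h1]
    have h2 : (-1:ℤ)^(m-j) = (-1)^m * (-1)^j := by
      have h3 : m - j + 2*j = m + j := by omega
      calc (-1:ℤ)^(m-j) = (-1)^(m-j) * ((-1:ℤ)^2)^j := by norm_num
        _ = (-1)^(m-j+2*j) := by rw [← pow_mul, ← pow_add]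
        _ = (-1)^(m+j) := by rw [h3]
        _ = (-1)^m * (-1)^j := by rw [pow_add]
    rw [h2]
    ring
  -- K (m+1) ≡ reflected sum mod m+1
  have hKT : (K (m+1) : ℤ) ≡ (∑ j ∈ range (m+1), (-1:ℤ)^j * (m.descFactorial j : ℤ))
      [ZMOD ((m+1 : ℕ) : ℤ)] := by
    rw [← ZMod.intCast_eq_intCast_iff]
    push_cast [K]
    refine Finset.sum_congr rfl fun j hj => ?_
    have hj' : j ≤ m := Nat.lt_succ_iff.mp (Finset.mem_range.mp hj)
    rw [desc_zmod m j hj', ← mul_assoc, ← pow_add]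
    have : Even (j + j) := ⟨j, rfl⟩
    rw [this.neg_one_pow, one_mul]
  rcases Nat.even_or_odd m with hE | hO
  · -- m even
    have hEv : Even m := hE
    obtain ⟨k, hk⟩ := hE
    have hodd1 : (-1:ℝ)^(m+1) = -1 := by
      have : Odd (m+1) := Even.add_one ⟨k, hk⟩
      exact this.neg_one_pow
    have heven2 : (-1:ℝ)^(m+2) = 1 := by
      have : Even (m+2) := ⟨k+1, by omega⟩
      exact this.neg_one_pow
    have hlow : (D:ℝ) - 1/((m:ℝ)+1) ≤ F * Real.exp (-1) := by
      have h := exp_lb (k+1)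
      have h2k : 2*(k+1) = m + 2 := by omega
      rw [h2k] at h
      have := mul_le_mul_of_nonneg_left h hF0.le
      rw [show (∑ i ∈ range (m+2), (-1 : ℝ) ^ i * (1 / (i.factorial : ℝ))) = P (m+2) from rfl,
        hP2, mul_add, hP1, hodd1] at this
      calc (D:ℝ) - 1/((m:ℝ)+1) = (D:ℝ) + (-1) * (F * (1/((m+1).factorial:ℝ))) := by
            rw [hFa]; ring
        _ = (D:ℝ) + F * (-1 * (1/((m+1).factorial:ℝ))) := by ring
        _ ≤ F * Real.exp (-1) := this
    have hhigh : F * Real.exp (-1) < (D:ℝ) := by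
      have h := exp_ub (k+1)
      have h2k : 2*(k+1)+1 = m + 3 := by omega
      rw [h2k] at h
      have := mul_le_mul_of_nonneg_left h hF0.le
      rw [show (∑ i ∈ range (m+3), (-1 : ℝ) ^ i * (1 / (i.factorial : ℝ))) = P (m+3) from rfl,
        hP3, hP2, hodd1, heven2] at this
      have hexpand : F * (P (m+1) + -1 * (1 / ((m+1).factorial:ℝ)) + 1 * (1 / ((m+2).factorial:ℝ)))
          = (D:ℝ) - 1/((m:ℝ)+1) + 1/(((m:ℝ)+1) * ((m:ℝ)+2)) := by
        rw [mul_add, mul_add, hP1]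
        rw [show F * (-1 * (1 / ((m+1).factorial:ℝ))) = -(F * (1 / ((m+1).factorial:ℝ))) by ring,
          hFa, show F * (1 * (1 / ((m+2).factorial:ℝ))) = F * (1 / ((m+2).factorial:ℝ)) by ring,
          hFb]
        ring
      rw [hexpand] at this
      have hlt : 1/(((m:ℝ)+1) * ((m:ℝ)+2)) < 1/((m:ℝ)+1) := by
        rw [div_lt_div_iff₀ (by positivity) (by positivity)]
        nlinarith
      linarith
    have hfloor : ⌊F / Real.exp 1⌋ = D - 1 := by
      rw [hexp]
      rw [Int.floor_eq_iff]
      constructor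
      · push_cast
        have : 1/((m:ℝ)+1) ≤ 1 := by
          rw [div_le_one hm1]; linarith
        linarith
      · push_cast
        linarith
    rw [hfloor, if_pos hEv]
    have hR : (-1:ℤ)^m * ((D:ℤ) - 1) + 1 = ∑ j ∈ range (m+1), (-1:ℤ)^j * (m.descFactorial j : ℤ) := by
      rw [hTD, hEv.neg_one_pow]
      ring
    rw [hR]
    exact_mod_cast hKT
  · -- m odd
    obtain ⟨k, hk⟩ := hO
    have hm1' : (1:ℝ) ≤ (m:ℝ) := by
      have : 1 ≤ m := by omega
      exact_mod_cast this
    have hodd1 : (-1:ℝ)^(m+1) = 1 := by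
      have : Even (m+1) := ⟨k+1, by omega⟩
      exact this.neg_one_pow
    have hlow : (D:ℝ) ≤ F * Real.exp (-1) := by
      have h := exp_lb (k+1)
      have h2k : 2*(k+1) = m + 1 := by omega
      rw [h2k] at h
      have := mul_le_mul_of_nonneg_left h hF0.le
      rw [show (∑ i ∈ range (m+1), (-1 : ℝ) ^ i * (1 / (i.factorial : ℝ))) = P (m+1) from rfl,
        hP1] at this
      exact this
    have hhigh : F * Real.exp (-1) ≤ (D:ℝ) + 1/((m:ℝ)+1) := by
      have h := exp_ub (k+1)
      have h2k : 2*(k+1)+1 = m + 2 := by omega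
      rw [h2k] at h
      have := mul_le_mul_of_nonneg_left h hF0.le
      rw [show (∑ i ∈ range (m+2), (-1 : ℝ) ^ i * (1 / (i.factorial : ℝ))) = P (m+2) from rfl,
        hP2, hodd1, mul_add, hP1, one_mul, hFa] at this
      exact this
    have hfloor : ⌊F / Real.exp 1⌋ = D := by
      rw [hexp]
      rw [Int.floor_eq_iff]
      constructor
      · exact hlow
      · push_cast
        have : 1/((m:ℝ)+1) < 1 := by
          rw [div_lt_one hm1]; linarith
        linarith
    have hnotEven : ¬ Even m := by
      rw [Nat.even_iff, hk]; omega
    rw [hfloor, if_neg hnotEven]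
    have hR : (-1:ℤ)^m * (D:ℤ) + 0 = ∑ j ∈ range (m+1), (-1:ℤ)^j * (m.descFactorial j : ℤ) := by
      rw [hTD]; ring
    rw [hR]
    exact_mod_cast hKT
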